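/- Let p be a prime and let R be a commutative ring of characteristic p. Let n ≥ 1 and let f ∈ R[t_1, …, t_n] be a nonzero polynomial, with associated evaluation function E(f) : R^n → R, x ↦ f(x). Then fdeg(E(f)) ≤ σ_p(f), where σ_p(f) is the p-weight degree of f. In particular, fdeg(E(f)) ≤ d holds for d := σ_p(f). -/

import Mathlib

/-- The difference operator `Δ_a` sending `f` to `x ↦ f (x + a) - f x`. -/
def disc {A B : Type*} [AddCommGroup A] [AddCommGroup B] (a : A) (f : A → B) : A → B :=
  fun x => f (x + a) - f x

/-- Iterated difference operator `Δ_{a_1} ⋯ Δ_{a_k} f` along a list `[a_1, …, a_k]`. -/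
def multiDisc {A B : Type*} [AddCommGroup A] [AddCommGroup B] : List A → (A → B) → (A → B)
  | [], f => f
  | a :: l, f => disc a (multiDisc l f)

/-- `FdegLE f d` says that the functional degree of `f` is at most `d`, i.e. all
`(d+1)`-fold iterated differences of `f` vanish. -/
def FdegLE {A B : Type*} [AddCommGroup A] [AddCommGroup B] (f : A → B) (d : ℕ) : Prop :=
  ∀ l : List A, l.length = d + 1 → multiDisc l f = 0


section Aux
variable {A B : Type*} [AddCommGroup A] [AddCommGroup B]

lemma multiDisc_append (l : List A) (a : A) (f : A → B) :
    multiDisc (l ++ [a]) f = multiDisc l (disc a f) := by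
  induction l with
  | nil => rfl
  | cons b l ih => simp only [List.cons_append, multiDisc]; exact congrArg (disc b) ih

lemma disc_add (a : A) (f g : A → B) : disc a (f + g) = disc a f + disc a g := by
  funext x; simp only [disc, Pi.add_apply]; abel

lemma multiDisc_add (l : List A) (f g : A → B) :
    multiDisc l (f + g) = multiDisc l f + multiDisc l g := by
  induction l with
  | nil => rfl
  | cons a l ih => simp only [multiDisc, ih, disc_add]

lemma disc_zero (a : A) : disc a (0 : A → B) = 0 := by
  funext x; simp [disc]

lemma multiDisc_zero (l : List A) : multiDisc l (0 : A → B) = 0 := by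
  induction l with
  | nil => rfl
  | cons a l ih => simp only [multiDisc, ih, disc_zero]

lemma FdegLE_zero_fn (d : ℕ) : FdegLE (0 : A → B) d := fun l _ => multiDisc_zero l

lemma FdegLE_add {f g : A → B} {d : ℕ} (hf : FdegLE f d) (hg : FdegLE g d) :
    FdegLE (f + g) d := fun l hl => by
  rw [multiDisc_add, hf l hl, hg l hl, add_zero]

lemma FdegLE_succ {f : A → B} {d : ℕ} (hf : FdegLE f d) : FdegLE f (d + 1) := by
  intro l hl
  match l with
  | a :: l' =>
    simp only [List.length_cons, Nat.add_right_cancel_iff] at hl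
    simp only [multiDisc, hf l' hl, disc_zero]

lemma FdegLE_mono {f : A → B} {d e : ℕ} (hf : FdegLE f d) (h : d ≤ e) : FdegLE f e := by
  induction e with
  | zero => exact Nat.le_zero.mp h ▸ hf
  | succ e ih =>
    rcases Nat.lt_or_ge d (e+1) with h' | h'
    · exact FdegLE_succ (ih (Nat.lt_succ_iff.mp h'))
    · exact (Nat.le_antisymm h h') ▸ hf

lemma disc_translate (a b : A) (f : A → B) :
    disc b (fun x => f (x + a)) = fun x => disc b f (x + a) := by
  funext x; simp only [disc]; rw [add_right_comm]

lemma multiDisc_translate (l : List A) (a : A) (f : A → B) :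
    multiDisc l (fun x => f (x + a)) = fun x => multiDisc l f (x + a) := by
  induction l with
  | nil => rfl
  | cons b l ih => simp only [multiDisc, ih, disc_translate]

lemma FdegLE_translate {f : A → B} {d : ℕ} (hf : FdegLE f d) (a : A) :
    FdegLE (fun x => f (x + a)) d := fun l hl => by
  rw [multiDisc_translate, hf l hl]; rfl

lemma FdegLE_const (c : B) : FdegLE (fun _ : A => c) 0 := by
  intro l hl
  match l with
  | [a] => funext x; simp [multiDisc, disc]

lemma FdegLE_disc {f : A → B} {d : ℕ} (hf : FdegLE f (d + 1)) (a : A) :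
    FdegLE (disc a f) d := by
  intro l hl
  rw [← multiDisc_append]
  exact hf (l ++ [a]) (by simp [hl])

lemma FdegLE_additive {f : A → B} (hf : ∀ x y, f (x + y) = f x + f y) :
    FdegLE f 1 := by
  intro l hl
  match l with
  | [a, b] =>
    have : disc b f = fun _ => f b := by
      funext x; simp [disc, hf]
    simp only [multiDisc, this]
    funext x; simp [disc]

end Aux

section Ring
variable {A B : Type*} [AddCommGroup A] [CommRing B]

lemma disc_mul (a : A) (f g : A → B) :
    disc a (f * g) = disc a f * (fun x => g (x + a)) + f * disc a g := by
  funext x; simp only [disc, Pi.add_apply, Pi.mul_apply]; ring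

lemma FdegLE_mul_aux : ∀ k d e : ℕ, ∀ f g : A → B, d + e = k →
    FdegLE f d → FdegLE g e → FdegLE (f * g) k := by
  intro k
  induction k using Nat.strong_induction_on with
  | _ k ih =>
    intro d e f g hk hf hg l hl
    rcases l.eq_nil_or_concat with rfl | ⟨L, a, rfl⟩
    all_goals try rw [List.concat_eq_append] at *
    · simp at hl
    · have hL : L.length = k := by
        have := hl; simp at this; omega
      rw [multiDisc_append, disc_mul, multiDisc_add]
      have h1 : multiDisc L (disc a f * fun x => g (x + a)) = 0 := by
        match d, hk with
        | 0, hk =>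
          have : disc a f = 0 := hf [a] rfl
          rw [this, zero_mul, multiDisc_zero]
        | d' + 1, hk =>
          exact ih (d' + e) (by omega) d' e _ _ rfl (FdegLE_disc hf a)
            (FdegLE_translate hg a) L (by omega)
      have h2 : multiDisc L (f * disc a g) = 0 := by
        match e, hk with
        | 0, hk =>
          have : disc a g = 0 := hg [a] rfl
          rw [this, mul_zero, multiDisc_zero]
        | e' + 1, hk =>
          exact ih (d + e') (by omega) d e' _ _ rfl hf (FdegLE_disc hg a) L (by omega)
      rw [h1, h2, add_zero]

lemma FdegLE_mul {f g : A → B} {d e : ℕ} (hf : FdegLE f d) (hg : FdegLE g e) :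
    FdegLE (f * g) (d + e) :=
  FdegLE_mul_aux (d + e) d e f g rfl hf hg

lemma FdegLE_finset_prod {ι : Type*} (s : Finset ι) (g : ι → A → B) (d : ι → ℕ)
    (h : ∀ i ∈ s, FdegLE (g i) (d i)) :
    FdegLE (fun x => ∏ i ∈ s, g i x) (∑ i ∈ s, d i) := by
  induction s using Finset.cons_induction with
  | empty => simpa using FdegLE_const (1 : B)
  | cons a s ha ih =>
    have : (fun x => ∏ i ∈ Finset.cons a s ha, g i x)
        = g a * fun x => ∏ i ∈ s, g i x := by
      funext x; simp [Finset.prod_cons]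
    rw [this, Finset.sum_cons]
    exact FdegLE_mul (h a (Finset.mem_cons_self a _))
      (ih fun i hi => h i (Finset.mem_cons_of_mem hi))

lemma FdegLE_finset_sum {ι : Type*} (s : Finset ι) (g : ι → A → B) (D : ℕ)
    (h : ∀ i ∈ s, FdegLE (g i) D) :
    FdegLE (fun x => ∑ i ∈ s, g i x) D := by
  induction s using Finset.cons_induction with
  | empty => simp only [Finset.sum_empty]; exact FdegLE_zero_fn D
  | cons a s ha ih =>
    have : (fun x => ∑ i ∈ Finset.cons a s ha, g i x)
        = g a + fun x => ∑ i ∈ s, g i x := by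
      funext x; simp [Finset.sum_cons]
    rw [this]
    exact FdegLE_add (h a (Finset.mem_cons_self a _))
      (ih fun i hi => h i (Finset.mem_cons_of_mem hi))

end Ring

lemma FdegLE_comp_hom {A A' B : Type*} [AddCommGroup A] [AddCommGroup A'] [AddCommGroup B]
    (φ : A →+ A') {g : A' → B} {d : ℕ} (hg : FdegLE g d) :
    FdegLE (fun x => g (φ x)) d := by
  have key : ∀ l : List A, ∀ h : A' → B,
      multiDisc l (fun x => h (φ x)) = fun x => multiDisc (l.map φ) h (φ x) := by
    intro l
    induction l with
    | nil => intro h; rfl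
    | cons a l ih =>
      intro h
      simp only [List.map_cons, multiDisc, ih]
      funext x; simp [disc, map_add]
  intro l hl
  rw [key l g, hg (l.map φ) (by simp [hl])]
  rfl

lemma FdegLE_pow_self {B : Type*} [CommRing B] (c : ℕ) :
    FdegLE (fun t : B => t ^ c) c := by
  induction c with
  | zero => simpa using FdegLE_const (1 : B)
  | succ c ih =>
    have : (fun t : B => t ^ (c + 1)) = (fun t : B => t ^ c) * fun t => t := by
      funext t; simp [pow_succ]
    rw [this]
    exact FdegLE_mul ih (FdegLE_additive fun x y => rfl)


section Char
variable (p : ℕ) (hp : p.Prime) (R : Type*) [CommRing R] [CharP R p]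
include hp

/-- Frobenius as an additive monoid hom in characteristic `p`. -/
noncomputable def frobHom : R →+ R := by
  haveI := Fact.mk hp
  exact {
    toFun := fun t => t ^ p
    map_zero' := by simp [hp.pos.ne']
    map_add' := fun x y => add_pow_char x y p }

lemma frobHom_apply (t : R) : frobHom p hp R t = t ^ p := rfl

lemma FdegLE_pow_ofDigits (L : List ℕ) :
    FdegLE (fun t : R => t ^ Nat.ofDigits p L) L.sum := by
  induction L with
  | nil => simpa using FdegLE_const (1 : R)
  | cons c L ih =>
    have key : (fun t : R => t ^ Nat.ofDigits p (c :: L))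
        = (fun t : R => t ^ c) * fun t : R => (frobHom p hp R t) ^ Nat.ofDigits p L := by
      funext t
      simp only [Pi.mul_apply, frobHom_apply, Nat.ofDigits_cons]
      rw [pow_add, pow_mul]
    rw [key, List.sum_cons]
    exact FdegLE_mul (FdegLE_pow_self c)
      (FdegLE_comp_hom (frobHom p hp R) ih)

lemma FdegLE_pow (d : ℕ) :
    FdegLE (fun t : R => t ^ d) ((Nat.digits p d).sum) := by
  have := FdegLE_pow_ofDigits p hp R (Nat.digits p d)
  rwa [Nat.ofDigits_digits] at this

end Char

/-- The `p`-weight degree `σ_p(f)` of a multivariate polynomial: the maximum over the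
monomials `t_1^{d_1} ⋯ t_n^{d_n}` occurring in `f` (with nonzero coefficient) of
`σ_p(d_1) + ⋯ + σ_p(d_n)`, where `σ_p(d)` is the sum of the base-`p` digits of `d`. -/
def pWeightDeg (p : ℕ) {R : Type*} [CommSemiring R] {n : ℕ}
    (f : MvPolynomial (Fin n) R) : ℕ :=
  f.support.sup fun m => ∑ i, (Nat.digits p (m i)).sum

/-- **Proposition 4.3.** If `R` is a commutative ring of prime characteristic `p` and
`f ∈ R[t_1, …, t_n]` is a nonzero polynomial, then the functional degree of the
evaluation function `E(f) : R^n → R` is at most the `p`-weight degree `σ_p(f)`. -/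
theorem fdeg_eval_le_pWeightDeg
    (p : ℕ) (hp : p.Prime) (R : Type*) [CommRing R] [CharP R p]
    (n : ℕ) (hn : 1 ≤ n) (f : MvPolynomial (Fin n) R) (hf : f ≠ 0) :
    FdegLE (fun x => MvPolynomial.eval x f) (pWeightDeg p f) := by
  have key : (fun x : Fin n → R => MvPolynomial.eval x f)
      = fun x => ∑ m ∈ f.support, MvPolynomial.coeff m f * ∏ i, x i ^ m i := by
    funext x
    rw [MvPolynomial.eval_eq']
  rw [key]
  apply FdegLE_finset_sum
  intro m hm
  have hb : (∑ i, (Nat.digits p (m i)).sum) ≤ pWeightDeg p f :=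
    Finset.le_sup (f := fun m : Fin n →₀ ℕ => ∑ i, (Nat.digits p (m i)).sum) hm
  apply FdegLE_mono _ hb
  have : (fun x : Fin n → R => MvPolynomial.coeff m f * ∏ i, x i ^ m i)
      = (fun _ : Fin n → R => MvPolynomial.coeff m f) * fun x => ∏ i, x i ^ m i := by
    funext x; rfl
  rw [this]
  have hprod : FdegLE (fun x : Fin n → R => ∏ i, x i ^ m i)
      (∑ i, (Nat.digits p (m i)).sum) := by
    apply FdegLE_finset_prod
    intro i _
    exact FdegLE_comp_hom (Pi.evalAddMonoidHom (fun _ : Fin n => R) i)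
      (FdegLE_pow p hp R (m i))
  simpa using FdegLE_mul (FdegLE_const (MvPolynomial.coeff m f)) hprod
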